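/- Let d ≥ 1, p ∈ ℝ^d with p ≠ 0, α > 0 and c ≥ 0. The d × d real matrix Δ with entries Δ_{μν} = (‖p‖² + c/‖p‖²)·δ_{μν} + ( (1 − α)/α − c/‖p‖⁴ )·p_μ p_ν has determinant det Δ = (‖p‖² + c/‖p‖²)^{d−1} · ‖p‖²/α. In particular, log det Δ − log det Δ|_{c=0} = (d − 1)·( log(‖p‖² + c/‖p‖²) − log ‖p‖² ) is independent of the gauge parameter α. -/

import Mathlib

open Real

lemma det_aux (d : ℕ) (hd : 1 ≤ d) (a b : ℝ) (ha : a ≠ 0) (v : Fin d → ℝ) :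
    (Matrix.of fun μ ν => a * (if μ = ν then 1 else 0) + b * (v μ * v ν)).det
      = a ^ (d - 1) * (a + b * ∑ i, v i * v i) := by
  have hM : (Matrix.of fun μ ν => a * (if μ = ν then 1 else 0) + b * (v μ * v ν))
      = a • (1 + Matrix.replicateCol Unit ((b / a) • v) * Matrix.replicateRow Unit v) := by
    ext μ ν
    simp [Matrix.mul_apply, Matrix.one_apply, Matrix.replicateCol, Matrix.replicateRow, mul_add,
      smul_eq_mul]
    field_simp
  rw [hM, Matrix.det_smul, Matrix.det_one_add_replicateCol_mul_replicateRow]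
  have hdot : dotProduct v ((b / a) • v) = (b / a) * ∑ i, v i * v i := by
    simp only [dotProduct, Pi.smul_apply, smul_eq_mul, Finset.mul_sum]
    congr 1; ext i; ring
  rw [hdot]
  have : a ^ Fintype.card (Fin d) = a ^ (d - 1) * a := by
    rw [Fintype.card_fin, ← pow_succ, Nat.sub_add_cancel hd]
  rw [this]
  field_simp

/-- Determinant of the momentum-space quadratic kernel of the
Gribov–Zwanziger action in linear covariant gauges: for `p ≠ 0`, `α > 0`, `c ≥ 0`, the
matrix `Δ_{μν} = (‖p‖² + c/‖p‖²)δ_{μν} + ((1 − α)/α − c/‖p‖⁴) p_μ p_ν` has determinant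
`(‖p‖² + c/‖p‖²)^{d−1}·‖p‖²/α`; in particular `log det Δ − log det Δ|_{c=0}` is
independent of the gauge parameter `α`. -/
theorem GZ_kernel_determinant (d : ℕ) (hd : 1 ≤ d)
    (p : EuclideanSpace ℝ (Fin d)) (hp : p ≠ 0) (α c : ℝ) (hα : 0 < α) (hc : 0 ≤ c) :
    let Δ : ℝ → Matrix (Fin d) (Fin d) ℝ := fun c' => Matrix.of fun μ ν =>
      (‖p‖ ^ 2 + c' / ‖p‖ ^ 2) * (if μ = ν then 1 else 0)
        + ((1 - α) / α - c' / ‖p‖ ^ 4) * (p μ * p ν)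
    (Δ c).det = (‖p‖ ^ 2 + c / ‖p‖ ^ 2) ^ (d - 1) * ‖p‖ ^ 2 / α
      ∧ Real.log (Δ c).det - Real.log (Δ 0).det
          = (d - 1) * (Real.log (‖p‖ ^ 2 + c / ‖p‖ ^ 2) - Real.log (‖p‖ ^ 2)) := by
  intro Δ
  have hpn : (0:ℝ) < ‖p‖ := norm_pos_iff.mpr hp
  have hp2 : (0:ℝ) < ‖p‖ ^ 2 := by positivity
  have hsum : ∑ i, p i * p i = ‖p‖ ^ 2 := by
    rw [← real_inner_self_eq_norm_sq]
    rw [PiLp.inner_apply]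
    simp only [RCLike.inner_apply, conj_trivial, mul_comm]
  have key : ∀ c' : ℝ, 0 ≤ c' → (Δ c').det
      = (‖p‖ ^ 2 + c' / ‖p‖ ^ 2) ^ (d - 1) * ‖p‖ ^ 2 / α := by
    intro c' hc'
    have ha : (0:ℝ) < ‖p‖ ^ 2 + c' / ‖p‖ ^ 2 := by positivity
    rw [show Δ c' = Matrix.of fun μ ν =>
        (‖p‖ ^ 2 + c' / ‖p‖ ^ 2) * (if μ = ν then 1 else 0)
          + ((1 - α) / α - c' / ‖p‖ ^ 4) * (p μ * p ν) from rfl,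
      det_aux d hd _ _ ha.ne' (fun i => p i), hsum]
    have : ‖p‖ ^ 2 + c' / ‖p‖ ^ 2 + ((1 - α) / α - c' / ‖p‖ ^ 4) * ‖p‖ ^ 2
        = ‖p‖ ^ 2 / α := by
      have h4 : ‖p‖ ^ 4 = ‖p‖ ^ 2 * ‖p‖ ^ 2 := by ring
      field_simp [h4]
      ring
    rw [this]
    ring
  have hkc := key c hc
  have hk0 := key 0 le_rfl
  refine ⟨hkc, ?_⟩
  rw [hkc, hk0]
  have ha : (0:ℝ) < ‖p‖ ^ 2 + c / ‖p‖ ^ 2 := by positivity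
  have hS : (0:ℝ) < ‖p‖ ^ 2 / α := by positivity
  simp only [zero_div, add_zero]
  have hl : ∀ x : ℝ, 0 < x → Real.log (x ^ (d - 1) * ‖p‖ ^ 2 / α)
      = ((d - 1 : ℕ) : ℝ) * Real.log x + Real.log (‖p‖ ^ 2) - Real.log α := by
    intro x hx
    rw [Real.log_div (by positivity) hα.ne', Real.log_mul (by positivity) hp2.ne',
      Real.log_pow]
  rw [hl _ ha, hl _ hp2]
  have hcast : ((d - 1 : ℕ) : ℝ) = (d : ℝ) - 1 := by
    rw [Nat.cast_sub hd, Nat.cast_one]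
  rw [hcast]
  ring
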